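/- Let η ∈ ∧²V* have rank k, kernel K, and let G be a complement of K in V. The map exp_η : β ↦ η + F(β) restricts to a bijection from I_Z ∩ {β : β|_{∧²K} = 0} onto the set of skew-symmetric bilinear forms η' on V of rank k whose kernel ker((η')♯) is transverse to G (i.e., ker((η')♯) ∩ G = 0). -/

import Mathlib

open Module

section Aux

variable {V : Type*} [AddCommGroup V] [Module ℝ V]

/-- inverse facts for a bijective endomorphism -/
lemma aux_inv_facts (T : Module.End ℝ V) (h : Function.Bijective T) :
    (∀ v, T (Ring.inverse T v) = v) ∧ (∀ v, Ring.inverse T (T v) = v) := by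
  have hU : IsUnit T := (Module.End.isUnit_iff T).mpr h
  have h1 : T * Ring.inverse T = 1 := Ring.mul_inverse_cancel T hU
  have h2 : Ring.inverse T * T = 1 := Ring.inverse_mul_cancel T hU
  constructor <;> intro v
  · have := congrArg (fun f : Module.End ℝ V => f v) h1
    simpa [Module.End.mul_apply] using this
  · have := congrArg (fun f : Module.End ℝ V => f v) h2
    simpa [Module.End.mul_apply] using this

end Aux

/-- let `η ∈ ∧²V*` have rank `k`, kernel `K`, `G` a complement of `K`
and `Z ∈ ∧²G` with `Z♯ = -(η|_G♯)⁻¹`.  The map `exp_η : β ↦ η + F(β)`, where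
`F(β)♯ = β♯ ∘ (id + Z♯β♯)⁻¹`, restricts to a bijection from
`I_Z ∩ {β skew : β|_{∧²K} = 0}` onto the set of skew-symmetric bilinear forms of
rank `k` whose kernel is transverse to `G`. -/
theorem exp_eta_bijection
    (V : Type*) [AddCommGroup V] [Module ℝ V] [FiniteDimensional ℝ V] (k : ℕ)
    (η : V →ₗ[ℝ] Module.Dual ℝ V) (hη : ∀ v w : V, η v w = - η w v)
    (hrank : Module.finrank ℝ (LinearMap.range η) = k)
    (G : Submodule ℝ V) (hG : IsCompl (LinearMap.ker η) G)
    (Z : Module.Dual ℝ V →ₗ[ℝ] V)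
    (hZskew : ∀ ξ χ : Module.Dual ℝ V, ξ (Z χ) = - χ (Z ξ))
    (hZG : ∀ ξ : Module.Dual ℝ V, Z ξ ∈ G)
    (hZann : ∀ ξ : Module.Dual ℝ V, (∀ g ∈ G, ξ g = 0) → Z ξ = 0)
    (hZη : ∀ g ∈ G, Z (η g) = -g) :
    Set.BijOn
      (fun β : V →ₗ[ℝ] Module.Dual ℝ V =>
        η + β ∘ₗ (Ring.inverse ((LinearMap.id + Z ∘ₗ β : V →ₗ[ℝ] V) : Module.End ℝ V) : V →ₗ[ℝ] V))
      {β : V →ₗ[ℝ] Module.Dual ℝ V |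
        (∀ v w : V, β v w = - β w v) ∧
        Function.Bijective ⇑(LinearMap.id + Z ∘ₗ β : V →ₗ[ℝ] V) ∧
        ∀ k₁ ∈ LinearMap.ker η, ∀ k₂ ∈ LinearMap.ker η, β k₁ k₂ = 0}
      {η' : V →ₗ[ℝ] Module.Dual ℝ V |
        (∀ v w : V, η' v w = - η' w v) ∧
        Module.finrank ℝ (LinearMap.range η') = k ∧
        Disjoint (LinearMap.ker η') G} := by
  classical
  set n := finrank ℝ V with hn
  set K := LinearMap.ker η with hK
  have hKmem : ∀ κ, κ ∈ K → η κ = 0 := fun κ hκ => hκ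
  have hKG_top : K ⊔ G = ⊤ := hG.codisjoint.eq_top
  have hext : ∀ ξ : Module.Dual ℝ V, (∀ g ∈ G, ξ g = 0) → (∀ κ ∈ K, ξ κ = 0) → ξ = 0 := by
    intro ξ h1 h2
    ext v
    have hv : v ∈ K ⊔ G := by rw [hKG_top]; exact Submodule.mem_top
    obtain ⟨κ, hκ, g, hg, rfl⟩ := Submodule.mem_sup.mp hv
    simp [h1 g hg, h2 κ hκ]
  have hηK : ∀ v, ∀ κ ∈ K, η v κ = 0 := by
    intro v κ hκ
    rw [hη]
    simp [hKmem κ hκ]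
  have hZηg : ∀ ξ : Module.Dual ℝ V, ∀ g ∈ G, η (Z ξ) g = - ξ g := by
    intro ξ g hg
    have h1 : η (Z ξ) g = - η g (Z ξ) := hη _ _
    have h2 : η g (Z ξ) = - ξ (Z (η g)) := hZskew (η g) ξ
    rw [h1, h2, hZη g hg]
    simp
  have hZηK : ∀ ξ : Module.Dual ℝ V, ∀ κ ∈ K, η (Z ξ) κ = 0 := by
    intro ξ κ hκ
    rw [hη]
    simp [hKmem κ hκ]
  have hdimK : k + finrank ℝ K = n := by
    have := LinearMap.finrank_range_add_finrank_ker η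
    rw [hrank] at this
    exact this
  have hdimG : finrank ℝ G = k := by
    have h := Submodule.finrank_add_eq_of_isCompl hG
    omega
  constructor
  · -- MapsTo
    intro β hβ
    obtain ⟨hskew, hbij, hKK⟩ := hβ
    show (η + β ∘ₗ (Ring.inverse ((LinearMap.id + Z ∘ₗ β : V →ₗ[ℝ] V) : Module.End ℝ V)
        : V →ₗ[ℝ] V)) ∈ _
    set T : Module.End ℝ V := ((LinearMap.id + Z ∘ₗ β : V →ₗ[ℝ] V) : Module.End ℝ V) with hT
    set A : V →ₗ[ℝ] V := (Ring.inverse T : V →ₗ[ℝ] V) with hA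
    have hTA : ∀ v, T (A v) = v := (aux_inv_facts T hbij).1
    have hAT : ∀ v, A (T v) = v := (aux_inv_facts T hbij).2
    have hTv : ∀ u, T u = u + Z (β u) := by
      intro u
      simp only [hT, LinearMap.add_apply, LinearMap.id_apply, LinearMap.comp_apply]
    set η' : V →ₗ[ℝ] Module.Dual ℝ V := η + β ∘ₗ A with hη'
    have happ : ∀ v w, η' v w = η v w + β (A v) w := by
      intro v w
      simp only [hη', LinearMap.add_apply, LinearMap.comp_apply]
    have hvAv : ∀ v, v = A v + Z (β (A v)) := by
      intro v
      conv_lhs => rw [← hTA v, hTv (A v)]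
    -- skewness of η'
    have hskew' : ∀ v w, η' v w = - η' w v := by
      intro v w
      have h1 : η' v w = η v w + β (A v) w := happ v w
      have h2 : η' w v = η w v + β (A w) v := happ w v
      have hw : β (A v) w = β (A v) (A w) + β (A v) (Z (β (A w))) := by
        conv_lhs => rw [hvAv w]
        simp only [map_add]
      have hv : β (A w) v = β (A w) (A v) + β (A w) (Z (β (A v))) := by
        conv_lhs => rw [hvAv v]
        simp only [map_add]
      have hz : β (A v) (Z (β (A w))) = - β (A w) (Z (β (A v))) := hZskew _ _
      have hs : β (A v) (A w) = - β (A w) (A v) := hskew _ _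
      have hηs : η v w = - η w v := hη v w
      rw [h1, h2, hw, hv, hz, hs, hηs]
      ring
    -- kernel of η'
    have hkerT : LinearMap.ker η' = K.map T := by
      apply le_antisymm
      · intro v hv
        have hv0 : η' v = 0 := hv
        have hu : A v ∈ K := by
          show η (A v) = 0
          apply hext
          · intro g hg
            have hηv : η v g = η (A v) g + η (Z (β (A v))) g := by
              conv_lhs => rw [hvAv v]
              simp only [map_add, LinearMap.add_apply]
            have h2 : η (Z (β (A v))) g = - β (A v) g := hZηg _ g hg
            have h3 : η' v g = 0 := by rw [hv0]; rfl
            rw [happ v g] at h3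
            linarith
          · intro κ hκ
            have hηv : η v κ = η (A v) κ + η (Z (β (A v))) κ := by
              conv_lhs => rw [hvAv v]
              simp only [map_add, LinearMap.add_apply]
            have h2 : η (Z (β (A v))) κ = 0 := hZηK _ κ hκ
            have h3 : η v κ = 0 := hηK v κ hκ
            linarith
        exact ⟨A v, hu, hTA v⟩
      · rintro x ⟨κ, hκ, rfl⟩
        show η' (T κ) = 0
        have hAκ : A (T κ) = κ := hAT κ
        apply hext
        · intro g hg
          rw [happ, hAκ, hTv κ]
          have h1 : η (κ + Z (β κ)) g = η κ g + η (Z (β κ)) g := by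
            simp only [map_add, LinearMap.add_apply]
          rw [h1, hKmem κ hκ, hZηg _ g hg]
          simp
        · intro κ' hκ'
          rw [happ, hAκ, hTv κ]
          have h1 : η (κ + Z (β κ)) κ' = η κ κ' + η (Z (β κ)) κ' := by
            simp only [map_add, LinearMap.add_apply]
          rw [h1, hKmem κ hκ, hZηK _ κ' hκ', hKK κ hκ κ' hκ']
          simp
    have hmapeq : K.map T = K.map ((LinearEquiv.ofBijective T hbij : V →ₗ[ℝ] V)) := rfl
    have hkerdim : finrank ℝ (LinearMap.ker η') = finrank ℝ K := by
      rw [hkerT, hmapeq]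
      exact LinearEquiv.finrank_map_eq (LinearEquiv.ofBijective T hbij) K
    refine ⟨hskew', ?_, ?_⟩
    · have h1 := LinearMap.finrank_range_add_finrank_ker η'
      rw [hkerdim] at h1
      omega
    · rw [Submodule.disjoint_def]
      intro x hx hxG
      rw [hkerT] at hx
      obtain ⟨κ, hκ, rfl⟩ := hx
      have hκG : κ ∈ G := by
        have h1 : κ = T κ - Z (β κ) := by rw [hTv κ]; abel
        rw [h1]
        exact sub_mem hxG (hZG _)
      have hκ0 : κ = 0 := Submodule.disjoint_def.mp hG.disjoint κ hκ hκG
      rw [hκ0]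
      simp
  constructor
  · -- InjOn
    rintro β₁ ⟨h1s, h1b, h1K⟩ β₂ ⟨h2s, h2b, h2K⟩ heq
    have heq' : η + β₁ ∘ₗ (Ring.inverse ((LinearMap.id + Z ∘ₗ β₁ : V →ₗ[ℝ] V) : Module.End ℝ V)
          : V →ₗ[ℝ] V)
        = η + β₂ ∘ₗ (Ring.inverse ((LinearMap.id + Z ∘ₗ β₂ : V →ₗ[ℝ] V) : Module.End ℝ V)
          : V →ₗ[ℝ] V) := heq
    set T₁ : Module.End ℝ V := ((LinearMap.id + Z ∘ₗ β₁ : V →ₗ[ℝ] V) : Module.End ℝ V) with hT₁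
    set T₂ : Module.End ℝ V := ((LinearMap.id + Z ∘ₗ β₂ : V →ₗ[ℝ] V) : Module.End ℝ V) with hT₂
    set A₁ : V →ₗ[ℝ] V := (Ring.inverse T₁ : V →ₗ[ℝ] V) with hA₁
    set A₂ : V →ₗ[ℝ] V := (Ring.inverse T₂ : V →ₗ[ℝ] V) with hA₂
    have hT₁A : ∀ v, T₁ (A₁ v) = v := (aux_inv_facts T₁ h1b).1
    have hA₁T : ∀ v, A₁ (T₁ v) = v := (aux_inv_facts T₁ h1b).2
    have hT₂A : ∀ v, T₂ (A₂ v) = v := (aux_inv_facts T₂ h2b).1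
    have hA₂T : ∀ v, A₂ (T₂ v) = v := (aux_inv_facts T₂ h2b).2
    have hT₁v : ∀ u, T₁ u = u + Z (β₁ u) := by
      intro u
      simp only [hT₁, LinearMap.add_apply, LinearMap.id_apply, LinearMap.comp_apply]
    have hT₂v : ∀ u, T₂ u = u + Z (β₂ u) := by
      intro u
      simp only [hT₂, LinearMap.add_apply, LinearMap.id_apply, LinearMap.comp_apply]
    have hγ : β₁ ∘ₗ A₁ = β₂ ∘ₗ A₂ := by
      ext v w
      have h := congrArg (fun f : V →ₗ[ℝ] Module.Dual ℝ V => f v w) heq'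
      simp only [LinearMap.add_apply, LinearMap.comp_apply] at h
      simp only [LinearMap.comp_apply]
      linarith
    have hAeq : A₁ = A₂ := by
      ext v
      have e1 : A₁ v = v - Z (β₁ (A₁ v)) := by
        have h := hT₁A v
        rw [hT₁v (A₁ v)] at h
        exact eq_sub_of_add_eq h
      have e2 : A₂ v = v - Z (β₂ (A₂ v)) := by
        have h := hT₂A v
        rw [hT₂v (A₂ v)] at h
        exact eq_sub_of_add_eq h
      have e3 : β₁ (A₁ v) = β₂ (A₂ v) := by
        have := congrArg (fun f : V →ₗ[ℝ] Module.Dual ℝ V => f v) hγ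
        simpa only [LinearMap.comp_apply] using this
      rw [e1, e2, e3]
    have hTeq : ∀ v, T₁ v = T₂ v := by
      intro v
      have h1 : A₁ (T₂ v) = v := by rw [hAeq]; exact hA₂T v
      calc T₁ v = T₁ (A₁ (T₂ v)) := by rw [h1]
        _ = T₂ v := hT₁A _
    ext v w
    have hb1 : β₁ v = (β₁ ∘ₗ A₁) (T₁ v) := by
      simp only [LinearMap.comp_apply, hA₁T v]
    have hb2 : β₂ v = (β₂ ∘ₗ A₂) (T₂ v) := by
      simp only [LinearMap.comp_apply, hA₂T v]
    rw [hb1, hb2, ← hγ, hTeq v]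
  · -- SurjOn
    rintro η' ⟨hskew', hrank', hdisj'⟩
    set γ : V →ₗ[ℝ] Module.Dual ℝ V := η' - η with hγdef
    have hγapp : ∀ v, γ v = η' v - η v := by
      intro v
      simp only [hγdef, LinearMap.sub_apply]
    have hkerdim' : k + finrank ℝ (LinearMap.ker η') = n := by
      have := LinearMap.finrank_range_add_finrank_ker η'
      rw [hrank'] at this
      exact this
    have hsup' : LinearMap.ker η' ⊔ G = ⊤ :=
      Submodule.eq_top_of_disjoint _ _ (by omega) hdisj'
    have hvanish : ∀ v, (∀ g ∈ G, η' v g = 0) → η' v = 0 := by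
      intro v h
      ext w
      have hw : w ∈ LinearMap.ker η' ⊔ G := by rw [hsup']; exact Submodule.mem_top
      obtain ⟨u, hu, g, hg, rfl⟩ := Submodule.mem_sup.mp hw
      have h1 : η' v u = - η' u v := hskew' v u
      have h2 : η' u = 0 := hu
      have h3 : η' v u = 0 := by rw [h1, h2]; simp
      simp only [map_add, LinearMap.zero_apply]
      rw [h3, h g hg]
    set T' : Module.End ℝ V := ((LinearMap.id - Z ∘ₗ γ : V →ₗ[ℝ] V) : Module.End ℝ V) with hT'
    have hT'app : ∀ v, T' v = v - Z (γ v) := by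
      intro v
      simp only [hT', LinearMap.sub_apply, LinearMap.id_apply, LinearMap.comp_apply]
    have hT'inj : Function.Injective T' := by
      rw [← LinearMap.ker_eq_bot]
      rw [Submodule.eq_bot_iff]
      intro v hv
      have hv0 : T' v = 0 := hv
      rw [hT'app] at hv0
      have hveq : v = Z (γ v) := by
        have := sub_eq_zero.mp hv0
        exact this
      have hvG : v ∈ G := by rw [hveq]; exact hZG _
      have hZη'v : Z (η' v) = 0 := by
        have h1 : Z (γ v) = Z (η' v) - Z (η v) := by rw [hγapp]; simp only [map_sub]
        have h2 : Z (η v) = -v := hZη v hvG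
        rw [h1, h2, sub_neg_eq_add] at hveq
        exact (right_eq_add.mp hveq)
      have hG0 : ∀ g ∈ G, η' v g = 0 := by
        intro g hg
        have hg' : g = - Z (η g) := by rw [hZη g hg]; simp
        rw [hg', map_neg]
        have h1 : η' v (Z (η g)) = - (η g) (Z (η' v)) := hZskew _ _
        rw [h1, hZη'v]
        simp
      have hv0' : η' v = 0 := hvanish v hG0
      exact Submodule.disjoint_def.mp hdisj' v hv0' hvG
    have hT'bij : Function.Bijective T' :=
      ⟨hT'inj, LinearMap.injective_iff_surjective.mp hT'inj⟩
    set B : V →ₗ[ℝ] V := (Ring.inverse T' : V →ₗ[ℝ] V) with hB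
    have hT'B : ∀ v, T' (B v) = v := (aux_inv_facts T' hT'bij).1
    have hBT' : ∀ v, B (T' v) = v := (aux_inv_facts T' hT'bij).2
    set β : V →ₗ[ℝ] Module.Dual ℝ V := γ ∘ₗ B with hβdef
    have hβapp : ∀ v, β v = γ (B v) := by
      intro v
      simp only [hβdef, LinearMap.comp_apply]
    have hvB : ∀ v, v = B v - Z (γ (B v)) := by
      intro v
      conv_lhs => rw [← hT'B v, hT'app (B v)]
    have hTβ : ((LinearMap.id + Z ∘ₗ β : V →ₗ[ℝ] V) : Module.End ℝ V) = (B : Module.End ℝ V) := by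
      ext v
      show v + Z (β v) = B v
      rw [hβapp]
      exact add_eq_of_eq_sub (hvB v)
    have hBbij : Function.Bijective B := by
      constructor
      · intro a b h
        rw [← hT'B a, ← hT'B b, h]
      · intro v
        exact ⟨T' v, hBT' v⟩
    have hRinv : (Ring.inverse ((LinearMap.id + Z ∘ₗ β : V →ₗ[ℝ] V) : Module.End ℝ V)
        : V →ₗ[ℝ] V) = (T' : V →ₗ[ℝ] V) := by
      rw [hTβ]
      have hU : IsUnit (B : Module.End ℝ V) := (Module.End.isUnit_iff _).mpr hBbij
      have h1 : (B : Module.End ℝ V) * T' = 1 := by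
        ext v
        simp only [Module.End.mul_apply, Module.End.one_apply]
        exact hBT' v
      calc (Ring.inverse (B : Module.End ℝ V) : Module.End ℝ V)
          = Ring.inverse (B : Module.End ℝ V) * ((B : Module.End ℝ V) * T') := by
            rw [h1, mul_one]
        _ = (Ring.inverse (B : Module.End ℝ V) * (B : Module.End ℝ V)) * T' := by
            rw [mul_assoc]
        _ = T' := by rw [Ring.inverse_mul_cancel _ hU, one_mul]
    -- membership of β in the domain
    have hβskew : ∀ v w, β v w = - β w v := by
      intro v w
      rw [hβapp v, hβapp w]
      have hγskew : ∀ a b, γ a b = - γ b a := by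
        intro a b
        rw [hγapp, hγapp]
        simp only [LinearMap.sub_apply]
        rw [hskew' a b, hη a b]
        ring
      have hw : γ (B v) w = γ (B v) (B w) - γ (B v) (Z (γ (B w))) := by
        conv_lhs => rw [hvB w]
        simp only [map_sub]
      have hv : γ (B w) v = γ (B w) (B v) - γ (B w) (Z (γ (B v))) := by
        conv_lhs => rw [hvB v]
        simp only [map_sub]
      have hz : γ (B v) (Z (γ (B w))) = - γ (B w) (Z (γ (B v))) := hZskew _ _
      have hs : γ (B v) (B w) = - γ (B w) (B v) := hγskew _ _
      rw [hw, hv, hz, hs]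
      ring
    have hβbij : Function.Bijective ⇑(LinearMap.id + Z ∘ₗ β : V →ₗ[ℝ] V) := by
      have h := hTβ
      rw [show ((LinearMap.id + Z ∘ₗ β : V →ₗ[ℝ] V)) = (B : V →ₗ[ℝ] V) from h]
      exact hBbij
    -- β vanishes on K × K
    have hT'ker : Submodule.map (T' : V →ₗ[ℝ] V) (LinearMap.ker η') = K := by
      apply Submodule.eq_of_le_of_finrank_le
      · rintro x ⟨v, hv, rfl⟩
        show η (T' v) = 0
        have hv0 : η' v = 0 := hv
        apply hext
        · intro g hg
          rw [hT'app]
          have h1 : η (v - Z (γ v)) g = η v g - η (Z (γ v)) g := by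
            simp only [map_sub, LinearMap.sub_apply]
          rw [h1, hZηg _ g hg, hγapp]
          have h2 : η' v g = 0 := by rw [hv0]; rfl
          simp only [LinearMap.sub_apply]
          rw [h2]
          ring
        · intro κ hκ
          rw [hT'app]
          have h1 : η (v - Z (γ v)) κ = η v κ - η (Z (γ v)) κ := by
            simp only [map_sub, LinearMap.sub_apply]
          rw [h1, hZηK _ κ hκ, hηK v κ hκ]
          ring
      · have h1 : finrank ℝ (Submodule.map
              ((LinearEquiv.ofBijective (T' : V →ₗ[ℝ] V) hT'bij : V →ₗ[ℝ] V))
              (LinearMap.ker η')) = finrank ℝ (LinearMap.ker η') :=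
          LinearEquiv.finrank_map_eq (LinearEquiv.ofBijective (T' : V →ₗ[ℝ] V) hT'bij) _
        have h2 : Submodule.map (T' : V →ₗ[ℝ] V) (LinearMap.ker η') =
            Submodule.map ((LinearEquiv.ofBijective (T' : V →ₗ[ℝ] V) hT'bij : V →ₗ[ℝ] V))
              (LinearMap.ker η') := rfl
        rw [h2, h1]
        omega
    have hβKK : ∀ k₁ ∈ K, ∀ k₂ ∈ K, β k₁ k₂ = 0 := by
      intro κ₁ hκ₁ κ₂ hκ₂
      have hκ₁' : κ₁ ∈ Submodule.map (T' : V →ₗ[ℝ] V) (LinearMap.ker η') := by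
        rw [hT'ker]; exact hκ₁
      obtain ⟨v, hv, hvκ⟩ := hκ₁'
      have hBκ : B κ₁ = v := by rw [← hvκ]; exact hBT' v
      rw [hβapp, hBκ, hγapp]
      have hv0 : η' v = 0 := hv
      simp only [LinearMap.sub_apply]
      rw [hv0, hηK v κ₂ hκ₂]
      simp
    refine ⟨β, ⟨hβskew, hβbij, hβKK⟩, ?_⟩
    show η + β ∘ₗ (Ring.inverse ((LinearMap.id + Z ∘ₗ β : V →ₗ[ℝ] V) : Module.End ℝ V)
        : V →ₗ[ℝ] V) = η'
    rw [hRinv]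
    have hcomp : β ∘ₗ (T' : V →ₗ[ℝ] V) = γ := by
      ext v
      simp only [LinearMap.comp_apply, hβapp, hBT' v]
    rw [hcomp, hγdef]
    abel
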